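/- Let H₀, H₁, H₂ be complex Hilbert spaces, T : H₀ → H₁ and S : H₁ → H₂ closed, densely defined (possibly unbounded) linear operators with range(T) ⊆ ker(S) (i.e. ST = 0 on Dom(T)). Let α ∈ H₁ with S(α) = 0 and let C > 0. Then there exists v ∈ Dom(T) with T(v) = α and ‖v‖ ≤ C if and only if |⟨u, α⟩|² ≤ C²(‖T*u‖² + ‖Su‖²) for all u ∈ Dom(T*) ∩ Dom(S). -/

import Mathlib

open LinearPMap

private lemma sq_le_aux {a b : ℝ} (ha : 0 ≤ a) (hb : 0 ≤ b) (h : a ^ 2 ≤ b ^ 2) : a ≤ b := by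
  nlinarith

/-- Hörmander's functional-analytic lemma (Proposition 2.19 of the paper): for closed,
densely defined operators `T : H₀ → H₁`, `S : H₁ → H₂` with `range T ⊆ ker S`, and
`α ∈ H₁` with `S α = 0`, there exists `v ∈ Dom T` with `T v = α` and `‖v‖ ≤ C` if and
only if `|⟨u, α⟩|² ≤ C²(‖T* u‖² + ‖S u‖²)` for all `u ∈ Dom T* ∩ Dom S`. -/
theorem stmt_14 {H₀ H₁ H₂ : Type*}
    [NormedAddCommGroup H₀] [InnerProductSpace ℂ H₀] [CompleteSpace H₀]
    [NormedAddCommGroup H₁] [InnerProductSpace ℂ H₁] [CompleteSpace H₁]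
    [NormedAddCommGroup H₂] [InnerProductSpace ℂ H₂] [CompleteSpace H₂]
    (T : H₀ →ₗ.[ℂ] H₁) (S : H₁ →ₗ.[ℂ] H₂)
    (hTdense : Dense (T.domain : Set H₀)) (hSdense : Dense (S.domain : Set H₁))
    (hTclosed : IsClosed (T.graph : Set (H₀ × H₁)))
    (hSclosed : IsClosed (S.graph : Set (H₁ × H₂)))
    (hST : ∀ x : T.domain, ∃ hx : (T x : H₁) ∈ S.domain, S ⟨T x, hx⟩ = 0)
    (α : H₁) (hα : ∃ hα' : α ∈ S.domain, S ⟨α, hα'⟩ = 0)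
    (C : ℝ) (hC : 0 < C) :
    (∃ v : T.domain, T v = α ∧ ‖(v : H₀)‖ ≤ C) ↔
      ∀ u : H₁, ∀ hu₁ : u ∈ T.adjoint.domain, ∀ hu₂ : u ∈ S.domain,
        ‖(inner ℂ u α : ℂ)‖ ^ 2 ≤
          C ^ 2 * (‖T.adjoint ⟨u, hu₁⟩‖ ^ 2 + ‖S ⟨u, hu₂⟩‖ ^ 2) := by
  constructor
  · rintro ⟨v, hv, hvC⟩ u hu₁ hu₂
    have hfa : (inner ℂ (T.adjoint ⟨u, hu₁⟩) (v : H₀) : ℂ) = inner ℂ u (T v) :=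
      adjoint_isFormalAdjoint hTdense ⟨u, hu₁⟩ v
    have h1 : (inner ℂ u α : ℂ) = inner ℂ (T.adjoint ⟨u, hu₁⟩) (v : H₀) := by
      rw [hfa, hv]
    have h2 : ‖(inner ℂ u α : ℂ)‖ ≤ ‖T.adjoint ⟨u, hu₁⟩‖ * C := by
      rw [h1]
      exact (norm_inner_le_norm _ _).trans
        (mul_le_mul_of_nonneg_left hvC (norm_nonneg _))
    nlinarith [pow_le_pow_left₀ (norm_nonneg (inner ℂ u α : ℂ)) h2 2,
      sq_nonneg ‖S ⟨u, hu₂⟩‖, sq_nonneg C, norm_nonneg (T.adjoint ⟨u, hu₁⟩), hC.le]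
  · intro hineq
    -- the kernel of `S` as a closed submodule
    set K : Submodule ℂ H₁ := S.graph.comap (LinearMap.inl ℂ H₁ H₂) with hKdef
    have hKmem : ∀ y : H₁, y ∈ K ↔ ∃ h : y ∈ S.domain, S ⟨y, h⟩ = 0 := by
      intro y
      simp only [hKdef, Submodule.mem_comap, LinearMap.inl_apply, mem_graph_iff]
      constructor
      · rintro ⟨z, hz1, hz2⟩
        refine ⟨hz1 ▸ z.2, ?_⟩
        have : (⟨y, hz1 ▸ z.2⟩ : S.domain) = z := Subtype.ext hz1.symm
        rw [this, hz2]
      · rintro ⟨h, h2⟩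
        exact ⟨⟨y, h⟩, rfl, h2⟩
    have hKclosed : IsClosed (K : Set H₁) := by
      have hc : Continuous (fun y : H₁ => ((y, (0 : H₂)) : H₁ × H₂)) :=
        continuous_id.prodMk continuous_const
      have : (K : Set H₁) = (fun y : H₁ => ((y, (0 : H₂)) : H₁ × H₂)) ⁻¹' (S.graph : Set (H₁ × H₂)) := rfl
      rw [this]
      exact hSclosed.preimage hc
    haveI : CompleteSpace K := hKclosed.completeSpace_coe
    have hTrange : ∀ x : T.domain, (T x : H₁) ∈ K := fun x => (hKmem _).2 (hST x)
    have hαK : α ∈ K := (hKmem α).2 hα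
    -- Key estimate: for every `u` in the domain of the adjoint
    have key : ∀ u : T.adjoint.domain, ‖(inner ℂ (u : H₁) α : ℂ)‖ ≤ C * ‖T.adjoint u‖ := by
      intro u
      set u₁ : H₁ := (K.orthogonalProjection (u : H₁) : H₁) with hu₁def
      have hu₁K : u₁ ∈ K := (K.orthogonalProjection (u : H₁)).2
      have hu₂orth : (u : H₁) - u₁ ∈ Kᗮ := K.sub_starProjection_mem_orthogonal _
      have h2dom : (u : H₁) - u₁ ∈ T.adjoint.domain := by
        apply mem_adjoint_domain_of_exists
        refine ⟨0, fun x => ?_⟩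
        rw [inner_zero_left]
        exact ((Submodule.mem_orthogonal' K _).1 hu₂orth _ (hTrange x)).symm
      have h2adj : T.adjoint ⟨(u : H₁) - u₁, h2dom⟩ = 0 := by
        apply adjoint_apply_eq hTdense
        intro x
        rw [inner_zero_left]
        exact ((Submodule.mem_orthogonal' K _).1 hu₂orth _ (hTrange x)).symm
      have h1dom : u₁ ∈ T.adjoint.domain := by
        have h := sub_mem u.2 h2dom
        simpa using h
      have h1adj : T.adjoint ⟨u₁, h1dom⟩ = T.adjoint u := by
        have heq : (⟨u₁, h1dom⟩ : T.adjoint.domain) = u - ⟨(u : H₁) - u₁, h2dom⟩ := by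
          ext; simp
        rw [heq, LinearPMap.map_sub, h2adj, sub_zero]
      obtain ⟨hS1, hS1val⟩ := (hKmem u₁).1 hu₁K
      have hiα : (inner ℂ (u : H₁) α : ℂ) = inner ℂ u₁ α := by
        have h0 : (inner ℂ ((u : H₁) - u₁) α : ℂ) = 0 :=
          (Submodule.mem_orthogonal' K _).1 hu₂orth α hαK
        rw [inner_sub_left, sub_eq_zero] at h0
        exact h0
      have hi := hineq u₁ h1dom hS1
      rw [hS1val, norm_zero, h1adj] at hi
      apply sq_le_aux (norm_nonneg _) (by positivity)
      calc ‖(inner ℂ (u : H₁) α : ℂ)‖ ^ 2 = ‖(inner ℂ u₁ α : ℂ)‖ ^ 2 := by rw [hiα]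
        _ ≤ C ^ 2 * (‖T.adjoint u‖ ^ 2 + 0 ^ 2) := hi
        _ = (C * ‖T.adjoint u‖) ^ 2 := by ring
    -- Well-definedness
    have hwd : ∀ u u' : T.adjoint.domain, T.adjoint u = T.adjoint u' →
        (inner ℂ α (u : H₁) : ℂ) = inner ℂ α (u' : H₁) := by
      intro u u' h
      have hk := key (u - u')
      rw [LinearPMap.map_sub, h, sub_self, norm_zero, mul_zero] at hk
      rw [AddSubgroupClass.coe_sub] at hk
      have h0 : (inner ℂ ((u : H₁) - (u' : H₁)) α : ℂ) = 0 := norm_le_zero_iff.1 hk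
      rw [inner_sub_left, sub_eq_zero] at h0
      rw [← inner_conj_symm, ← inner_conj_symm α (u' : H₁), h0]
    -- The functional on the range of the adjoint
    set W : Submodule ℂ H₀ := LinearMap.range T.adjoint.toFun with hWdef
    have hsel : ∀ w : W, ∃ u : T.adjoint.domain, T.adjoint u = (w : H₀) := fun w =>
      LinearMap.mem_range.1 w.2
    choose sel hselval using hsel
    have hselwd : ∀ (w : W) (u : T.adjoint.domain), T.adjoint u = (w : H₀) →
        (inner ℂ α ((sel w : T.adjoint.domain) : H₁) : ℂ) = inner ℂ α (u : H₁) := by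
      intro w u hu
      exact hwd _ _ (by rw [hselval, hu])
    set g : W →ₗ[ℂ] ℂ :=
      { toFun := fun w => (inner ℂ α ((sel w : T.adjoint.domain) : H₁) : ℂ)
        map_add' := by
          intro w w'
          have h1 : (inner ℂ α ((sel (w + w') : T.adjoint.domain) : H₁) : ℂ) =
              inner ℂ α ((sel w + sel w' : T.adjoint.domain) : H₁) := by
            apply hselwd
            rw [LinearPMap.map_add, hselval, hselval]
            rfl
          beta_reduce
          rw [h1]
          simp [inner_add_right]
        map_smul' := by
          intro c w
          have h1 : (inner ℂ α ((sel (c • w) : T.adjoint.domain) : H₁) : ℂ) =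
              inner ℂ α ((c • sel w : T.adjoint.domain) : H₁) := by
            apply hselwd
            rw [LinearPMap.map_smul, hselval]
            rfl
          rw [h1]
          simp [inner_smul_right] } with hgdef
    have hgbound : ∀ w : W, ‖g w‖ ≤ C * ‖w‖ := by
      intro w
      have h1 : ‖g w‖ = ‖(inner ℂ ((sel w : T.adjoint.domain) : H₁) α : ℂ)‖ := by
        rw [hgdef]
        simp only [LinearMap.coe_mk, AddHom.coe_mk]
        rw [← inner_conj_symm]
        exact RCLike.norm_conj _
      rw [h1]
      calc ‖(inner ℂ ((sel w : T.adjoint.domain) : H₁) α : ℂ)‖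
          ≤ C * ‖T.adjoint (sel w)‖ := key _
        _ = C * ‖w‖ := by rw [hselval]; rfl
    set G : W →L[ℂ] ℂ := g.mkContinuous C hgbound with hGdef
    obtain ⟨Gext, hGext, hGnorm⟩ := exists_extension_norm_eq W G
    set v : H₀ := (InnerProductSpace.toDual ℂ H₀).symm Gext with hvdef
    have hvnorm : ‖v‖ ≤ C := by
      rw [hvdef, LinearIsometryEquiv.norm_map, hGnorm]
      exact g.mkContinuous_norm_le hC.le hgbound
    have hvinner : ∀ u : T.adjoint.domain,
        (inner ℂ v (T.adjoint u) : ℂ) = inner ℂ α (u : H₁) := by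
      intro u
      have hmem : T.adjoint u ∈ W := LinearMap.mem_range.2 ⟨u, rfl⟩
      calc (inner ℂ v (T.adjoint u) : ℂ) = Gext (T.adjoint u) :=
            InnerProductSpace.toDual_symm_apply
        _ = G ⟨T.adjoint u, hmem⟩ := hGext ⟨T.adjoint u, hmem⟩
        _ = inner ℂ α ((sel ⟨T.adjoint u, hmem⟩ : T.adjoint.domain) : H₁) := rfl
        _ = inner ℂ α (u : H₁) := hselwd _ _ rfl
    -- Show `(v, α)` belongs to the graph of `T` via orthogonality in `WithLp 2 (H₀ × H₁)`
    set e : WithLp 2 (H₀ × H₁) ≃L[ℂ] H₀ × H₁ :=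
      WithLp.prodContinuousLinearEquiv 2 ℂ H₀ H₁ with hedef
    set G' : Submodule ℂ (WithLp 2 (H₀ × H₁)) :=
      T.graph.comap (e.toLinearEquiv : WithLp 2 (H₀ × H₁) →ₗ[ℂ] H₀ × H₁) with hG'def
    have hG'mem : ∀ x : WithLp 2 (H₀ × H₁), x ∈ G' ↔ e x ∈ T.graph := fun x => Iff.rfl
    have hG'closed : IsClosed (G' : Set (WithLp 2 (H₀ × H₁))) := by
      have : (G' : Set (WithLp 2 (H₀ × H₁))) = e ⁻¹' (T.graph : Set (H₀ × H₁)) := rfl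
      rw [this]
      exact hTclosed.preimage e.continuous
    haveI : CompleteSpace G' := hG'closed.completeSpace_coe
    have horth : G'ᗮᗮ = G' := Submodule.orthogonal_orthogonal G'
    set p : WithLp 2 (H₀ × H₁) := (WithLp.equiv 2 (H₀ × H₁)).symm (v, α) with hpdef
    have hpG' : p ∈ G' := by
      rw [← horth]
      rw [Submodule.mem_orthogonal]
      intro q hq
      -- q is orthogonal to the graph
      have hgr : ∀ x : T.domain,
          (inner ℂ ((x : H₀)) q.fst : ℂ) + inner ℂ (T x) q.snd = 0 := by
        intro x
        have hr : ((WithLp.equiv 2 (H₀ × H₁)).symm ((x : H₀), (T x : H₁))) ∈ G' := by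
          rw [hG'mem]
          have : e ((WithLp.equiv 2 (H₀ × H₁)).symm ((x : H₀), (T x : H₁))) =
              ((x : H₀), (T x : H₁)) := rfl
          rw [this]
          exact T.mem_graph x
        have := hq _ hr
        rw [WithLp.prod_inner_apply] at this
        exact this
      have hgr' : ∀ x : T.domain,
          (inner ℂ q.fst ((x : H₀)) : ℂ) + inner ℂ q.snd (T x) = 0 := by
        intro x
        have := congrArg (starRingEnd ℂ) (hgr x)
        simpa [inner_conj_symm] using this
      have hq2dom : q.snd ∈ T.adjoint.domain := by
        apply mem_adjoint_domain_of_exists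
        refine ⟨-q.fst, fun x => ?_⟩
        rw [inner_neg_left]
        linear_combination -hgr' x
      have hq2adj : T.adjoint ⟨q.snd, hq2dom⟩ = -q.fst := by
        apply adjoint_apply_eq hTdense
        intro x
        rw [inner_neg_left]
        linear_combination -hgr' x
      have hv1 : (inner ℂ v (-q.fst) : ℂ) = inner ℂ α q.snd := by
        have := hvinner ⟨q.snd, hq2dom⟩
        rwa [hq2adj] at this
      have hv2 : (inner ℂ q.fst v : ℂ) + inner ℂ q.snd α = 0 := by
        have := congrArg (starRingEnd ℂ) hv1
        rw [inner_conj_symm, inner_conj_symm] at this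
        rw [inner_neg_left] at this
        linear_combination -this
      rw [WithLp.prod_inner_apply, hpdef]
      exact hv2
    have hgraph : ((v, α) : H₀ × H₁) ∈ T.graph := by
      have := (hG'mem p).1 hpG'
      have he : e p = (v, α) := rfl
      rwa [he] at this
    rw [mem_graph_iff] at hgraph
    obtain ⟨x, hx1, hx2⟩ := hgraph
    refine ⟨x, hx2, ?_⟩
    rw [show ((x : H₀)) = v from hx1]
    exact hvnorm
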